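/- Let q, r be positive integers and μ ∈ ℤ^{q+r} a weakly decreasing tuple. Suppose w is a permutation of the q+r coordinates of μ + ρ (ρ strictly decreasing) such that the first q coordinates of w(μ+ρ) are strictly decreasing and the last r coordinates are strictly decreasing, where w is not the identity. Then the sum of the first q coordinates of w(μ+ρ) - ρ is strictly less than the sum of the first q coordinates of μ, and the sum of the last r coordinates of w(μ+ρ) - ρ is strictly greater than the sum of the last r coordinates of μ. -/

import Mathlib

/-- Let `μ : Fin (q+r) → ℤ` be weakly decreasing and `ρ` strictly decreasing.
If `w ≠ 1` is a permutation such that `v = (μ + ρ) ∘ w` is strictly decreasing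
on its first `q` coordinates and on its last `r` coordinates, then the sum of
the first `q` coordinates of `v - ρ` is strictly less than the sum of the first
`q` coordinates of `μ`, and the sum of the last `r` coordinates of `v - ρ` is
strictly greater than the sum of the last `r` coordinates of `μ`. -/
theorem stmt_13 (q r : ℕ) (hq : 0 < q) (hr : 0 < r)
    (μ ρ : Fin (q + r) → ℤ)
    (hμ : ∀ i j : Fin (q + r), i ≤ j → μ j ≤ μ i)
    (hρ : ∀ i j : Fin (q + r), i < j → ρ j < ρ i)
    (w : Equiv.Perm (Fin (q + r))) (hw : w ≠ 1)
    (hfirst : ∀ i j : Fin (q + r), i < j → j.val < q →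
      μ (w j) + ρ (w j) < μ (w i) + ρ (w i))
    (hlast : ∀ i j : Fin (q + r), i < j → q ≤ i.val →
      μ (w j) + ρ (w j) < μ (w i) + ρ (w i)) :
    (∑ i ∈ Finset.univ.filter (fun i : Fin (q + r) => i.val < q),
        (μ (w i) + ρ (w i) - ρ i)) <
      (∑ i ∈ Finset.univ.filter (fun i : Fin (q + r) => i.val < q), μ i) ∧
    (∑ i ∈ Finset.univ.filter (fun i : Fin (q + r) => q ≤ i.val), μ i) <
      (∑ i ∈ Finset.univ.filter (fun i : Fin (q + r) => q ≤ i.val),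
        (μ (w i) + ρ (w i) - ρ i)) := by
  set ν : Fin (q + r) → ℤ := fun i => μ i + ρ i with hνdef
  have hanti : StrictAnti ν := fun i j hij =>
    add_lt_add_of_le_of_lt (hμ i j hij.le) (hρ i j hij)
  -- In the first block, i ≤ w i
  have hA : ∀ i : Fin (q + r), i.val < q → i ≤ w i := by
    intro i hi
    have hsub : (Finset.Iio i).image w ⊆ Finset.Iio (w i) := by
      intro x hx
      simp only [Finset.mem_image, Finset.mem_Iio] at hx ⊢
      obtain ⟨j, hj, rfl⟩ := hx
      exact hanti.lt_iff_gt.mp (hfirst j i hj hi)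
    have hcard := Finset.card_le_card hsub
    rw [Finset.card_image_of_injective _ w.injective] at hcard
    simp only [Fin.card_Iio] at hcard
    exact Fin.le_def.mpr hcard
  -- In the second block, w i ≤ i
  have hB : ∀ i : Fin (q + r), q ≤ i.val → w i ≤ i := by
    intro i hi
    have hsub : (Finset.Ioi i).image w ⊆ Finset.Ioi (w i) := by
      intro x hx
      simp only [Finset.mem_image, Finset.mem_Ioi] at hx ⊢
      obtain ⟨j, hj, rfl⟩ := hx
      exact hanti.lt_iff_gt.mp (hlast i j hj hi)
    have hcard := Finset.card_le_card hsub
    rw [Finset.card_image_of_injective _ w.injective] at hcard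
    simp only [Fin.card_Ioi] at hcard
    have h1 := i.isLt
    have h2 := (w i).isLt
    exact Fin.le_def.mpr (by omega)
  have hle1 : ∀ i : Fin (q + r), i.val < q → ν (w i) ≤ ν i := fun i hi =>
    hanti.antitone (hA i hi)
  have hle2 : ∀ i : Fin (q + r), q ≤ i.val → ν i ≤ ν (w i) := fun i hi =>
    hanti.antitone (hB i hi)
  set F := Finset.univ.filter (fun i : Fin (q + r) => i.val < q) with hF
  set L := Finset.univ.filter (fun i : Fin (q + r) => q ≤ i.val) with hL
  -- total sums agree
  have htot : (∑ i ∈ F, ν (w i)) + (∑ i ∈ L, ν (w i))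
      = (∑ i ∈ F, ν i) + (∑ i ∈ L, ν i) := by
    have hperm : ∑ i : Fin (q + r), ν (w i) = ∑ i : Fin (q + r), ν i :=
      Equiv.sum_comp w ν
    have hsplit : ∀ g : Fin (q + r) → ℤ,
        (∑ i ∈ F, g i) + (∑ i ∈ L, g i) = ∑ i : Fin (q + r), g i := by
      intro g
      rw [hF, hL]
      have : (Finset.univ.filter (fun i : Fin (q + r) => q ≤ i.val))
          = Finset.univ.filter (fun i : Fin (q + r) => ¬ i.val < q) := by
        apply Finset.filter_congr
        intro i _
        simp [not_lt]
      rw [this, Finset.sum_filter_add_sum_filter_not]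
    rw [hsplit, hsplit, hperm]
  -- weak inequalities
  have hwF : ∀ i ∈ F, ν (w i) ≤ ν i := by
    intro i hi
    exact hle1 i (by simpa [hF] using hi)
  have hwL : ∀ i ∈ L, ν i ≤ ν (w i) := by
    intro i hi
    exact hle2 i (by simpa [hL] using hi)
  -- strictness somewhere
  obtain ⟨i0, hi0⟩ : ∃ i, w i ≠ i := by
    by_contra h
    push_neg at h
    exact hw (Equiv.ext h)
  have hstrict : (∑ i ∈ F, ν (w i)) < ∑ i ∈ F, ν i := by
    rcases lt_or_ge i0.val q with h0 | h0
    · exact Finset.sum_lt_sum hwF ⟨i0, by simp [hF, h0],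
        hanti (lt_of_le_of_ne (hA i0 h0) (Ne.symm hi0))⟩
    · have : (∑ i ∈ L, ν i) < ∑ i ∈ L, ν (w i) :=
        Finset.sum_lt_sum hwL ⟨i0, by simp [hL, h0],
          hanti (lt_of_le_of_ne (hB i0 h0) hi0)⟩
      linarith
  have hstrictL : (∑ i ∈ L, ν i) < ∑ i ∈ L, ν (w i) := by linarith
  -- convert to the stated form
  have eF1 : ∑ i ∈ F, (μ (w i) + ρ (w i) - ρ i)
      = (∑ i ∈ F, ν (w i)) - ∑ i ∈ F, ρ i := by
    rw [Finset.sum_sub_distrib]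
  have eF2 : ∑ i ∈ F, μ i = (∑ i ∈ F, ν i) - ∑ i ∈ F, ρ i := by
    rw [← Finset.sum_sub_distrib]
    exact Finset.sum_congr rfl (fun i _ => by simp [hνdef])
  have eL1 : ∑ i ∈ L, (μ (w i) + ρ (w i) - ρ i)
      = (∑ i ∈ L, ν (w i)) - ∑ i ∈ L, ρ i := by
    rw [Finset.sum_sub_distrib]
  have eL2 : ∑ i ∈ L, μ i = (∑ i ∈ L, ν i) - ∑ i ∈ L, ρ i := by
    rw [← Finset.sum_sub_distrib]
    exact Finset.sum_congr rfl (fun i _ => by simp [hνdef])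
  constructor
  · rw [eF1, eF2]; linarith
  · rw [eL1, eL2]; linarith
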